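/- Let A_1, A_2, A_3 and B_1, B_2, B_3 be elements of GL_2(ℂ) with A_1A_2A_3 = I = B_1B_2B_3. Suppose that for each i the matrix B_i is conjugate to A_i in GL_2(ℂ), that the triple (A_1,A_2,A_3) is irreducible (the only ℂ-subspaces of ℂ² invariant under all of A_1, A_2, A_3 are 0 and ℂ²), and that the triple (B_1,B_2,B_3) is irreducible. Then there exists a single P ∈ GL_2(ℂ) with B_i = P A_i P^{−1} for i = 1, 2, 3. -/

import Mathlib

open Matrix

noncomputable section
abbrev Mat2 := Matrix (Fin 2) (Fin 2) ℂ

lemma exists_char_root (t d : ℂ) : ∃ l : ℂ, l ^ 2 - t * l + d = 0 := by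
  obtain ⟨x, hx⟩ := IsAlgClosed.exists_root
    (Polynomial.C (1:ℂ) * Polynomial.X ^ 2 + Polynomial.C (-t) * Polynomial.X + Polynomial.C d)
    (by rw [Polynomial.degree_quadratic one_ne_zero]; exact two_ne_zero)
  refine ⟨x, ?_⟩
  have := hx
  simp [Polynomial.IsRoot] at this
  linear_combination this

lemma det_sub_smul (M : Mat2) (l : ℂ) :
    (M - l • 1).det = l ^ 2 - M.trace * l + M.det := by
  rw [det_fin_two, trace_fin_two, det_fin_two]
  simp [Matrix.sub_apply, Matrix.smul_apply, Matrix.one_apply]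
  ring

lemma ch_factor (M : Mat2) (l m : ℂ) (hs : l + m = M.trace) (hp : l * m = M.det) :
    (M - l • 1) * (M - m • 1) = 0 := by
  rw [trace_fin_two] at hs
  rw [det_fin_two] at hp
  ext i j
  fin_cases i <;> fin_cases j <;>
    simp [Matrix.mul_apply, Fin.sum_univ_two, Matrix.sub_apply, Matrix.smul_apply,
      Matrix.one_apply]
  · linear_combination (-(M 0 0)) * hs + hp
  · linear_combination (-(M 0 1)) * hs
  · linear_combination (-(M 1 0)) * hs
  · linear_combination (-(M 1 1)) * hs + hp
lemma inv_mem_of_mapsTo {S : Mat2} (hS : IsUnit S) {W : Submodule ℂ (Fin 2 → ℂ)}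
    (h : ∀ v ∈ W, S.mulVec v ∈ W) : ∀ v ∈ W, S⁻¹.mulVec v ∈ W := by
  have hdet : IsUnit S.det := (Matrix.isUnit_iff_isUnit_det S).1 hS
  let f : W →ₗ[ℂ] W := (S.mulVecLin).restrict (p := W) (q := W) (by
    intro x hx; simpa using h x hx)
  have hinj : Function.Injective f := by
    intro x y hxy
    have hval : S.mulVec x.1 = S.mulVec y.1 := by
      have := congrArg Subtype.val hxy
      simpa [f, LinearMap.restrict_apply] using this
    have := congrArg (fun v => S⁻¹.mulVec v) hval
    simp only [Matrix.mulVec_mulVec, Matrix.nonsing_inv_mul S hdet, Matrix.one_mulVec] at this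
    exact Subtype.ext this
  have hsurj := (LinearMap.injective_iff_surjective).1 hinj
  intro v hv
  obtain ⟨⟨w, hw⟩, hfw⟩ := hsurj ⟨v, hv⟩
  have hval : S.mulVec w = v := by
    have := congrArg Subtype.val hfw
    simpa [f, LinearMap.restrict_apply] using this
  have : S⁻¹.mulVec v = w := by
    rw [← hval, Matrix.mulVec_mulVec, Matrix.nonsing_inv_mul S hdet, Matrix.one_mulVec]
  rw [this]; exact hw

/-- Two-generator irreducibility from three-generator irreducibility. -/
lemma irr_two {A₁ A₂ A₃ : Mat2} (hA1 : IsUnit A₁) (hA2 : IsUnit A₂)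
    (hprod : A₁ * A₂ * A₃ = 1)
    (hirr : ∀ W : Submodule ℂ (Fin 2 → ℂ),
      (∀ v ∈ W, A₁.mulVec v ∈ W) → (∀ v ∈ W, A₂.mulVec v ∈ W) →
      (∀ v ∈ W, A₃.mulVec v ∈ W) → W = ⊥ ∨ W = ⊤) :
    ∀ W : Submodule ℂ (Fin 2 → ℂ),
      (∀ v ∈ W, A₁.mulVec v ∈ W) → (∀ v ∈ W, A₂.mulVec v ∈ W) → W = ⊥ ∨ W = ⊤ := by
  intro W h1 h2
  have hA3 : A₃ = A₂⁻¹ * A₁⁻¹ := by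
    rw [← Matrix.mul_inv_rev]
    exact (Matrix.inv_eq_right_inv hprod).symm
  refine hirr W h1 h2 ?_
  intro v hv
  rw [hA3, ← Matrix.mulVec_mulVec]
  exact inv_mem_of_mapsTo hA2 h2 _ (inv_mem_of_mapsTo hA1 h1 v hv)

/-- Transport of two-generator irreducibility along conjugation. -/
lemma irr_conj {A₁ A₂ : Mat2} {S : Mat2} (hS : IsUnit S)
    (hirr : ∀ W : Submodule ℂ (Fin 2 → ℂ),
      (∀ v ∈ W, A₁.mulVec v ∈ W) → (∀ v ∈ W, A₂.mulVec v ∈ W) → W = ⊥ ∨ W = ⊤) :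
    ∀ W : Submodule ℂ (Fin 2 → ℂ),
      (∀ v ∈ W, (S * A₁ * S⁻¹).mulVec v ∈ W) → (∀ v ∈ W, (S * A₂ * S⁻¹).mulVec v ∈ W) →
      W = ⊥ ∨ W = ⊤ := by
  have hdet : IsUnit S.det := (Matrix.isUnit_iff_isUnit_det S).1 hS
  intro W h1 h2
  set W₀ : Submodule ℂ (Fin 2 → ℂ) := W.map (Matrix.mulVecLin S⁻¹) with hW₀
  have key : ∀ A : Mat2, (∀ v ∈ W, (S * A * S⁻¹).mulVec v ∈ W) →
      ∀ v ∈ W₀, A.mulVec v ∈ W₀ := by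
    intro A hA v hv
    obtain ⟨w, hw, rfl⟩ := hv
    refine ⟨(S * A * S⁻¹).mulVec w, hA w hw, ?_⟩
    simp only [Matrix.mulVecLin_apply, Matrix.mulVec_mulVec]
    rw [← Matrix.mul_assoc, ← Matrix.mul_assoc, Matrix.nonsing_inv_mul S hdet, Matrix.one_mul]
  have hback : W = W₀.map (Matrix.mulVecLin S) := by
    rw [hW₀, ← Submodule.map_comp, ← Matrix.mulVecLin_mul, Matrix.mul_nonsing_inv S hdet,
      Matrix.mulVecLin_one, Submodule.map_id]
  rcases hirr W₀ (key A₁ h1) (key A₂ h2) with h | h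
  · left; rw [hback, h, Submodule.map_bot]
  · right
    rw [hback, h, Submodule.map_top, LinearMap.range_eq_top]
    refine fun v => ⟨S⁻¹.mulVec v, ?_⟩
    simp only [Matrix.mulVecLin_apply, Matrix.mulVec_mulVec, Matrix.mul_nonsing_inv S hdet,
      Matrix.one_mulVec]

lemma span_singleton_ne_top (u : Fin 2 → ℂ) : Submodule.span ℂ {u} ≠ ⊤ := by
  intro h
  have h0 : (Pi.single 0 1 : Fin 2 → ℂ) ∈ Submodule.span ℂ {u} := h ▸ Submodule.mem_top
  have h1 : (Pi.single 1 1 : Fin 2 → ℂ) ∈ Submodule.span ℂ {u} := h ▸ Submodule.mem_top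
  obtain ⟨c₀, hc₀⟩ := Submodule.mem_span_singleton.1 h0
  obtain ⟨c₁, hc₁⟩ := Submodule.mem_span_singleton.1 h1
  have e00 : c₀ * u 0 = 1 := by simpa using congrFun hc₀ 0
  have e01 : c₀ * u 1 = 0 := by simpa using congrFun hc₀ 1
  have e11 : c₁ * u 1 = 1 := by simpa using congrFun hc₁ 1
  have hc₀ne : c₀ ≠ 0 := fun h => by simp [h] at e00
  have hu1 : u 1 = 0 := by
    rcases mul_eq_zero.1 e01 with h | h
    · exact absurd h hc₀ne
    · exact h
  rw [hu1, mul_zero] at e11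
  exact zero_ne_one e11

lemma exists_eigen (M : Mat2) : ∃ (l : ℂ) (u : Fin 2 → ℂ), u ≠ 0 ∧ M.mulVec u = l • u := by
  obtain ⟨l, hl⟩ := exists_char_root M.trace M.det
  have hdet : (M - l • 1).det = 0 := by rw [det_sub_smul]; linear_combination hl
  obtain ⟨u, hu, huK⟩ := (Matrix.exists_mulVec_eq_zero_iff).2 hdet
  refine ⟨l, u, hu, ?_⟩
  have : M.mulVec u - (l • (1 : Mat2)).mulVec u = 0 := by
    rw [← Matrix.sub_mulVec]; exact huK
  have h2 : (l • (1 : Mat2)).mulVec u = l • u := by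
    rw [Matrix.smul_mulVec, Matrix.one_mulVec]
  rw [h2] at this
  exact sub_eq_zero.1 this

/-- span of a single vector stable under matrices implies contradiction with irreducibility -/
lemma not_irr_of_common_eigen {X₁ X₂ X₃ : Mat2} (hX1 : IsUnit X₁) (hX2 : IsUnit X₂)
    (hprod : X₁ * X₂ * X₃ = 1) {u : Fin 2 → ℂ} (hu : u ≠ 0)
    (h1 : ∀ v ∈ Submodule.span ℂ {u}, X₁.mulVec v ∈ Submodule.span ℂ {u})
    (h2 : ∀ v ∈ Submodule.span ℂ {u}, X₂.mulVec v ∈ Submodule.span ℂ {u})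
    (hirr : ∀ W : Submodule ℂ (Fin 2 → ℂ),
      (∀ v ∈ W, X₁.mulVec v ∈ W) → (∀ v ∈ W, X₂.mulVec v ∈ W) →
      (∀ v ∈ W, X₃.mulVec v ∈ W) → W = ⊥ ∨ W = ⊤) : False := by
  rcases irr_two hX1 hX2 hprod hirr (Submodule.span ℂ {u}) h1 h2 with h | h
  · have hm : u ∈ Submodule.span ℂ {u} := Submodule.mem_span_singleton_self u
    rw [h] at hm
    exact hu ((Submodule.mem_bot ℂ).1 hm)
  · exact span_singleton_ne_top u h

/-- invariance of a span of an eigenvector -/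
lemma span_stable_of_eigen {X : Mat2} {u : Fin 2 → ℂ} {l : ℂ} (h : X.mulVec u = l • u) :
    ∀ v ∈ Submodule.span ℂ {u}, X.mulVec v ∈ Submodule.span ℂ {u} := by
  intro v hv
  obtain ⟨a, rfl⟩ := Submodule.mem_span_singleton.1 hv
  rw [Matrix.mulVec_smul, h]
  exact Submodule.smul_mem _ _ (Submodule.smul_mem _ _ (Submodule.mem_span_singleton_self u))

lemma B1_nonscalar {B₁ B₂ B₃ : Mat2} (hB1 : IsUnit B₁) (hB2 : IsUnit B₂)
    (hprodB : B₁ * B₂ * B₃ = 1)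
    (hirrB : ∀ W : Submodule ℂ (Fin 2 → ℂ),
      (∀ v ∈ W, B₁.mulVec v ∈ W) → (∀ v ∈ W, B₂.mulVec v ∈ W) →
      (∀ v ∈ W, B₃.mulVec v ∈ W) → W = ⊥ ∨ W = ⊤) :
    ∀ z : ℂ, B₁ ≠ z • 1 := by
  intro z hz
  obtain ⟨l, u, hu, hMu⟩ := exists_eigen B₂
  refine not_irr_of_common_eigen hB1 hB2 hprodB hu ?_ (span_stable_of_eigen hMu) hirrB
  intro v hv
  rw [hz, Matrix.smul_mulVec, Matrix.one_mulVec]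
  exact Submodule.smul_mem _ _ hv

lemma normal_form (M : Mat2) (hns : ∀ z : ℂ, M ≠ z • 1) :
    ∃ R : Mat2, IsUnit R ∧
      ((∃ l m : ℂ, l ≠ m ∧ M * R = R * !![l,0;0,m]) ∨ (∃ l : ℂ, M * R = R * !![l,1;0,l])) := by
  obtain ⟨l, hl⟩ := exists_char_root M.trace M.det
  set t := M.trace with ht
  set d := M.det with hd
  set m := t - l with hm
  have hs : l + m = t := by rw [hm]; ring
  have hp : l * m = d := by rw [hm]; linear_combination -hl
  have hCH : (M - l • 1) * (M - m • 1) = 0 := ch_factor M l m hs hp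
  by_cases hlm : l = m
  · -- Jordan case
    set N := M - l • 1 with hN
    have hN2 : N * N = 0 := by rw [hN]; nth_rewrite 2 [hlm]; exact hCH
    have hNne : N ≠ 0 := by
      intro h
      exact hns l (by rw [← sub_eq_zero]; exact h)
    have e00 : N 0 0 * N 0 0 + N 0 1 * N 1 0 = 0 := by
      have := congrFun (congrFun hN2 0) 0
      simpa [Matrix.mul_apply, Fin.sum_univ_two] using this
    have e10 : N 1 0 * N 0 0 + N 1 1 * N 1 0 = 0 := by
      have := congrFun (congrFun hN2 1) 0
      simpa [Matrix.mul_apply, Fin.sum_univ_two] using this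
    have e11 : N 1 0 * N 0 1 + N 1 1 * N 1 1 = 0 := by
      have := congrFun (congrFun hN2 1) 1
      simpa [Matrix.mul_apply, Fin.sum_univ_two] using this
    have hNM : ∀ i j, N i j = M i j - (l • (1:Mat2)) i j := by
      intro i j; rw [hN]; simp [Matrix.sub_apply]
    by_cases h3 : N 1 0 = 0
    · -- N is strictly upper triangular
      have hn1 : N 0 0 = 0 := by
        have : N 0 0 * N 0 0 = 0 := by linear_combination e00 - N 0 1 * h3
        exact (mul_self_eq_zero).1 this
      have hn4 : N 1 1 = 0 := by
        have : N 1 1 * N 1 1 = 0 := by linear_combination e11 - N 0 1 * h3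
        exact (mul_self_eq_zero).1 this
      have hn2 : N 0 1 ≠ 0 := by
        intro h
        apply hNne
        ext i j
        fin_cases i <;> fin_cases j <;> simp [hn1, hn4, h, h3]
      refine ⟨!![N 0 1, 0; 0, 1], ?_, Or.inr ⟨l, ?_⟩⟩
      · rw [Matrix.isUnit_iff_isUnit_det, Matrix.det_fin_two_of, isUnit_iff_ne_zero]
        intro h; apply hn2; linear_combination h
      · have hM : ∀ i j, M i j = N i j + (l • (1:Mat2)) i j := by
          intro i j; rw [hN]; simp [Matrix.sub_apply]
        ext i j
        fin_cases i <;> fin_cases j <;>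
          simp [Matrix.mul_apply, Fin.sum_univ_two, hM, Matrix.smul_apply, Matrix.one_apply,
            hn1, hn4, h3] <;> ring
    · -- N 1 0 ≠ 0
      refine ⟨!![N 0 0, 1; N 1 0, 0], ?_, Or.inr ⟨l, ?_⟩⟩
      · rw [Matrix.isUnit_iff_isUnit_det, Matrix.det_fin_two_of, isUnit_iff_ne_zero]
        intro h; apply h3; linear_combination -h
      · have hM : ∀ i j, M i j = N i j + (l • (1:Mat2)) i j := by
          intro i j; rw [hN]; simp [Matrix.sub_apply]
        ext i j
        fin_cases i <;> fin_cases j <;>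
          simp [Matrix.mul_apply, Fin.sum_univ_two, hM, Matrix.smul_apply, Matrix.one_apply]
        · linear_combination e00
        · linear_combination e10
  · -- distinct eigenvalues
    have hdetK : (M - l • 1).det = 0 := by rw [det_sub_smul]; linear_combination hl
    have hdetL : (M - m • 1).det = 0 := by
      rw [det_sub_smul, ← ht, ← hd, hm]; linear_combination hl
    obtain ⟨u, hu, huK⟩ := (Matrix.exists_mulVec_eq_zero_iff).2 hdetK
    obtain ⟨v, hv, hvL⟩ := (Matrix.exists_mulVec_eq_zero_iff).2 hdetL
    have hMu : M.mulVec u = l • u := by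
      have h1 : M.mulVec u - (l • (1:Mat2)).mulVec u = 0 := by rw [← Matrix.sub_mulVec]; exact huK
      rw [Matrix.smul_mulVec, Matrix.one_mulVec] at h1
      exact sub_eq_zero.1 h1
    have hMv : M.mulVec v = m • v := by
      have h1 : M.mulVec v - (m • (1:Mat2)).mulVec v = 0 := by rw [← Matrix.sub_mulVec]; exact hvL
      rw [Matrix.smul_mulVec, Matrix.one_mulVec] at h1
      exact sub_eq_zero.1 h1
    refine ⟨!![u 0, v 0; u 1, v 1], ?_, Or.inl ⟨l, m, hlm, ?_⟩⟩
    · rw [Matrix.isUnit_iff_isUnit_det, Matrix.det_fin_two_of, isUnit_iff_ne_zero]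
      intro hdet
      -- v is a multiple of u
      have hkey : ∃ c : ℂ, v = c • u := by
        by_cases h0 : u 0 = 0
        · have h1 : u 1 ≠ 0 := by
            intro h1
            apply hu; ext i; fin_cases i <;> simp [h0, h1]
          have hv0 : v 0 = 0 := by
            have h2 : v 0 * u 1 = 0 := by linear_combination -hdet + v 1 * h0
            rcases mul_eq_zero.1 h2 with h | h
            · exact h
            · exact absurd h h1
          refine ⟨v 1 / u 1, ?_⟩
          ext i
          fin_cases i
          · simp [h0, hv0]
          · simp only [Pi.smul_apply, smul_eq_mul, Fin.mk_one, Fin.zero_eta]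
            field_simp
        · refine ⟨v 0 / u 0, ?_⟩
          ext i
          fin_cases i
          · simp only [Pi.smul_apply, smul_eq_mul, Fin.mk_one, Fin.zero_eta]
            field_simp
          · simp only [Pi.smul_apply, smul_eq_mul, Fin.mk_one, Fin.zero_eta]
            field_simp
            linear_combination hdet
      obtain ⟨c, rfl⟩ := hkey
      have h2 : (c * l) • u = (c * m) • u := by
        have h3 := hMv
        rw [Matrix.mulVec_smul, hMu, smul_smul, smul_smul, mul_comm m c] at h3
        exact h3
      have h4 : (c * l - c * m) • u = 0 := by rw [sub_smul, h2, sub_self]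
      rcases smul_eq_zero.1 h4 with h | h
      · have hc : c = 0 := by
          rcases mul_eq_zero.1 (by linear_combination h : c * (l - m) = 0) with h' | h'
          · exact h'
          · exact absurd (sub_eq_zero.1 h') hlm
        apply hv; rw [hc, zero_smul]
      · exact hu h
    · ext i j
      have hu' := congrFun hMu
      have hv' := congrFun hMv
      simp [Matrix.mulVec, dotProduct, Fin.sum_univ_two] at hu' hv'
      fin_cases i <;> fin_cases j <;>
        simp [Matrix.mul_apply, Fin.sum_univ_two]
      · linear_combination hu'.1
      · linear_combination hv'.1 + v 0 * hm
      · linear_combination hu'.2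
      · linear_combination hv'.2 + v 1 * hm

lemma core_diag {l m a b c e a' b' c' e' : ℂ} (hlm : l ≠ m)
    (h1 : a + e = a' + e') (h2 : a * e - b * c = a' * e' - b' * c')
    (h3 : l * a + m * e = l * a' + m * e') :
    !![b', 0; 0, b] * !![a, b; c, e] = !![a', b'; c', e'] * !![b', 0; 0, b] ∧
    !![b', 0; 0, b] * !![l, 0; 0, m] = !![l, 0; 0, m] * !![b', 0; 0, b] := by
  have ha : a = a' := by
    have h4 : (l - m) * a = (l - m) * a' := by linear_combination h3 - m * h1
    exact mul_left_cancel₀ (sub_ne_zero.2 hlm) h4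
  have he : e = e' := by linear_combination h1 - ha
  have hbc : b * c = b' * c' := by linear_combination e * ha + a' * he - h2
  constructor
  · rw [Matrix.mul_fin_two, Matrix.mul_fin_two]
    ext i j
    fin_cases i <;> fin_cases j <;> simp
    · linear_combination b' * ha
    · linear_combination hbc
    · linear_combination b * he
  · rw [Matrix.mul_fin_two, Matrix.mul_fin_two]
    ext i j
    fin_cases i <;> fin_cases j <;> simp
    · ring
    · ring

lemma core_jordan {l a b c e a' b' c' e' : ℂ}
    (h1 : a + e = a' + e') (h2 : a * e - b * c = a' * e' - b' * c')
    (h3 : l * a + c + l * e = l * a' + c' + l * e') :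
    !![c, e - e'; 0, c] * !![a, b; c, e] = !![a', b'; c', e'] * !![c, e - e'; 0, c] ∧
    !![c, e - e'; 0, c] * !![l, 1; 0, l] = !![l, 1; 0, l] * !![c, e - e'; 0, c] := by
  have hc : c = c' := by linear_combination h3 - l * h1
  constructor
  · rw [Matrix.mul_fin_two, Matrix.mul_fin_two]
    ext i j
    fin_cases i <;> fin_cases j <;> simp
    · linear_combination c * h1
    · linear_combination e * h1 - h2 - b' * hc
    · exact Or.inl hc
    · linear_combination (e - e') * hc
  · rw [Matrix.mul_fin_two, Matrix.mul_fin_two]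
    ext i j
    fin_cases i <;> fin_cases j <;> simp <;> try ring

lemma my_trace_conj {Q : Mat2} (hQ : IsUnit Q) (A : Mat2) : (Q * A * Q⁻¹).trace = A.trace := by
  have hQd := (Matrix.isUnit_iff_isUnit_det Q).1 hQ
  rw [Matrix.trace_mul_comm, ← Matrix.mul_assoc, Matrix.nonsing_inv_mul Q hQd, Matrix.one_mul]

lemma conj_comm {X Y S : Mat2} (hS : IsUnit S) (h : S * X * S⁻¹ = Y) : S * X = Y * S := by
  have hSd := (Matrix.isUnit_iff_isUnit_det S).1 hS
  rw [← h, Matrix.mul_assoc _ S⁻¹ S, Matrix.nonsing_inv_mul S hSd, Matrix.mul_one]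

lemma no_common_eigen_of_irr2 {X₁ X₂ : Mat2}
    (hirr2 : ∀ W : Submodule ℂ (Fin 2 → ℂ),
      (∀ v ∈ W, X₁.mulVec v ∈ W) → (∀ v ∈ W, X₂.mulVec v ∈ W) → W = ⊥ ∨ W = ⊤)
    {u : Fin 2 → ℂ} (hu : u ≠ 0) {l₁ l₂ : ℂ}
    (h1 : X₁.mulVec u = l₁ • u) (h2 : X₂.mulVec u = l₂ • u) : False := by
  rcases hirr2 (Submodule.span ℂ {u}) (span_stable_of_eigen h1) (span_stable_of_eigen h2)
    with h | h
  · have hm : u ∈ Submodule.span ℂ {u} := Submodule.mem_span_singleton_self u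
    rw [h] at hm
    exact hu ((Submodule.mem_bot ℂ).1 hm)
  · exact span_singleton_ne_top u h

lemma schur {P A₁ A₂ B₁ B₂ : Mat2} (hP : P ≠ 0)
    (h1 : P * A₁ = B₁ * P) (h2 : P * A₂ = B₂ * P)
    (hirr2 : ∀ W : Submodule ℂ (Fin 2 → ℂ),
      (∀ v ∈ W, A₁.mulVec v ∈ W) → (∀ v ∈ W, A₂.mulVec v ∈ W) → W = ⊥ ∨ W = ⊤) :
    IsUnit P := by
  set W := LinearMap.ker P.mulVecLin with hW
  have key : ∀ (A B : Mat2), P * A = B * P → ∀ v ∈ W, A.mulVec v ∈ W := by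
    intro A B h v hv
    have hv' : P.mulVec v = 0 := by
      simpa [hW, LinearMap.mem_ker, Matrix.mulVecLin_apply] using hv
    have : P.mulVec (A.mulVec v) = 0 := by
      rw [Matrix.mulVec_mulVec, h, ← Matrix.mulVec_mulVec, hv', Matrix.mulVec_zero]
    simpa [hW, LinearMap.mem_ker, Matrix.mulVecLin_apply] using this
  rcases hirr2 W (key _ _ h1) (key _ _ h2) with h | h
  · rw [Matrix.isUnit_iff_isUnit_det, isUnit_iff_ne_zero]
    intro hdet
    obtain ⟨v, hv, hPv⟩ := (Matrix.exists_mulVec_eq_zero_iff).2 hdet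
    apply hv
    have hvW : v ∈ W := by simp [hW, LinearMap.mem_ker, Matrix.mulVecLin_apply, hPv]
    rwa [h, Submodule.mem_bot] at hvW
  · exfalso; apply hP
    ext i j
    have hm : (Pi.single j 1 : Fin 2 → ℂ) ∈ W := h ▸ Submodule.mem_top
    have h0 : P.mulVec (Pi.single j 1) = 0 := by
      simpa [hW, LinearMap.mem_ker, Matrix.mulVecLin_apply] using hm
    have := congrFun h0 i
    simpa [Matrix.mulVec_single] using this

lemma assemble {A₁ A₂ A₃ B₁ B₂ B₃ P : Mat2}
    (hprodA : A₁ * A₂ * A₃ = 1) (hprodB : B₁ * B₂ * B₃ = 1)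
    (hP : IsUnit P) (h1 : P * A₁ = B₁ * P) (h2 : P * A₂ = B₂ * P) :
    B₁ = P * A₁ * P⁻¹ ∧ B₂ = P * A₂ * P⁻¹ ∧ B₃ = P * A₃ * P⁻¹ := by
  have hPd := (Matrix.isUnit_iff_isUnit_det P).1 hP
  have e1 : B₁ = P * A₁ * P⁻¹ := by
    rw [h1, Matrix.mul_assoc, Matrix.mul_nonsing_inv P hPd, Matrix.mul_one]
  have e2 : B₂ = P * A₂ * P⁻¹ := by
    rw [h2, Matrix.mul_assoc, Matrix.mul_nonsing_inv P hPd, Matrix.mul_one]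
  refine ⟨e1, e2, ?_⟩
  have hA3 : A₃ = (A₁ * A₂)⁻¹ := (Matrix.inv_eq_right_inv hprodA).symm
  have hB3 : B₃ = (B₁ * B₂)⁻¹ := (Matrix.inv_eq_right_inv hprodB).symm
  have hBB : B₁ * B₂ = P * (A₁ * A₂) * P⁻¹ := by
    rw [e1, e2]
    rw [Matrix.mul_assoc (P * A₁) P⁻¹ (P * A₂ * P⁻¹), ← Matrix.mul_assoc P⁻¹ (P * A₂) P⁻¹,
      ← Matrix.mul_assoc P⁻¹ P A₂, Matrix.nonsing_inv_mul P hPd, Matrix.one_mul]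
    noncomm_ring
  rw [hB3, hA3, hBB, Matrix.mul_inv_rev, Matrix.mul_inv_rev,
    Matrix.nonsing_inv_nonsing_inv P hPd, Matrix.mul_assoc]

/-- Rigidity of irreducible triples of `2×2` matrices with product the identity: if
`A₁A₂A₃ = I = B₁B₂B₃`, each `B_i` is conjugate to `A_i`, and both triples are irreducible
(the only common invariant subspaces of `ℂ²` are `0` and `ℂ²`), then the two triples are
simultaneously conjugate by a single invertible matrix `P`. -/
theorem rank_two_hypergeometric_rigidity
    (A₁ A₂ A₃ B₁ B₂ B₃ : Matrix (Fin 2) (Fin 2) ℂ)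
    (hA1 : IsUnit A₁) (hA2 : IsUnit A₂) (hA3 : IsUnit A₃)
    (hB1 : IsUnit B₁) (hB2 : IsUnit B₂) (hB3 : IsUnit B₃)
    (hprodA : A₁ * A₂ * A₃ = 1) (hprodB : B₁ * B₂ * B₃ = 1)
    (hconj1 : ∃ Q : Matrix (Fin 2) (Fin 2) ℂ, IsUnit Q ∧ B₁ = Q * A₁ * Q⁻¹)
    (hconj2 : ∃ Q : Matrix (Fin 2) (Fin 2) ℂ, IsUnit Q ∧ B₂ = Q * A₂ * Q⁻¹)
    (hconj3 : ∃ Q : Matrix (Fin 2) (Fin 2) ℂ, IsUnit Q ∧ B₃ = Q * A₃ * Q⁻¹)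
    (hirrA : ∀ W : Submodule ℂ (Fin 2 → ℂ),
      (∀ v ∈ W, A₁.mulVec v ∈ W) → (∀ v ∈ W, A₂.mulVec v ∈ W) →
      (∀ v ∈ W, A₃.mulVec v ∈ W) → W = ⊥ ∨ W = ⊤)
    (hirrB : ∀ W : Submodule ℂ (Fin 2 → ℂ),
      (∀ v ∈ W, B₁.mulVec v ∈ W) → (∀ v ∈ W, B₂.mulVec v ∈ W) →
      (∀ v ∈ W, B₃.mulVec v ∈ W) → W = ⊥ ∨ W = ⊤) :
    ∃ P : Matrix (Fin 2) (Fin 2) ℂ, IsUnit P ∧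
      B₁ = P * A₁ * P⁻¹ ∧ B₂ = P * A₂ * P⁻¹ ∧ B₃ = P * A₃ * P⁻¹ := by
  obtain ⟨Q, hQ, hQ1⟩ := hconj1
  have htr2 : A₂.trace = B₂.trace := by
    obtain ⟨Q₂, hQ₂, h⟩ := hconj2; rw [h, my_trace_conj hQ₂]
  have hdet2 : A₂.det = B₂.det := by
    obtain ⟨Q₂, hQ₂, h⟩ := hconj2; rw [h, Matrix.det_conj hQ₂]
  have htr12 : (A₁ * A₂).trace = (B₁ * B₂).trace := by
    obtain ⟨Q₃, hQ₃, h⟩ := hconj3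
    have hQ₃d := (Matrix.isUnit_iff_isUnit_det Q₃).1 hQ₃
    have hA : A₁ * A₂ = A₃⁻¹ := (Matrix.inv_eq_left_inv hprodA).symm
    have hB : B₁ * B₂ = B₃⁻¹ := (Matrix.inv_eq_left_inv hprodB).symm
    rw [hA, hB, h, Matrix.mul_inv_rev, Matrix.mul_inv_rev,
      Matrix.nonsing_inv_nonsing_inv Q₃ hQ₃d, ← Matrix.mul_assoc, my_trace_conj hQ₃]
  have hns := B1_nonscalar hB1 hB2 hprodB hirrB
  obtain ⟨R, hR, hcase⟩ := normal_form B₁ hns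
  have hRd := (Matrix.isUnit_iff_isUnit_det R).1 hR
  have hRinv : IsUnit R⁻¹ := Matrix.isUnit_nonsing_inv_iff.2 hR
  set U : Mat2 := R⁻¹ * Q with hUdef
  have hU : IsUnit U := hRinv.mul hQ
  have hUd := (Matrix.isUnit_iff_isUnit_det U).1 hU
  have hUinv : U⁻¹ = Q⁻¹ * R := by
    rw [hUdef, Matrix.mul_inv_rev, Matrix.nonsing_inv_nonsing_inv R hRd]
  set A' : Mat2 := U * A₂ * U⁻¹ with hA'def
  set B' : Mat2 := R⁻¹ * B₂ * R with hB'def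
  have hRR : (R⁻¹)⁻¹ = R := Matrix.nonsing_inv_nonsing_inv R hRd
  have hB'conj : B' = R⁻¹ * B₂ * (R⁻¹)⁻¹ := by rw [hRR]
  have hA'J : U * A₁ * U⁻¹ = R⁻¹ * B₁ * R := by
    rw [hUinv, hUdef, hQ1]
    noncomm_ring
  have h_tr : A'.trace = B'.trace := by
    rw [hA'def, my_trace_conj hU, hB'conj, my_trace_conj hRinv]; exact htr2
  have h_det : A'.det = B'.det := by
    rw [hA'def, Matrix.det_conj hU, hB'conj, Matrix.det_conj hRinv]; exact hdet2
  have cancelU : U⁻¹ * U = 1 := Matrix.nonsing_inv_mul U hUd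
  have cancelR : R * R⁻¹ = 1 := Matrix.mul_nonsing_inv R hRd
  have hirrA2 := irr_two hA1 hA2 hprodA hirrA
  -- the two normal-form cases
  rcases hcase with ⟨l, m, hlm, hMR⟩ | ⟨l, hMR⟩
  · -- diagonalizable case, J = !![l,0;0,m]
    have hJB : R⁻¹ * B₁ * R = !![l,0;0,m] := by
      rw [Matrix.mul_assoc, hMR, ← Matrix.mul_assoc, Matrix.nonsing_inv_mul R hRd,
        Matrix.one_mul]
    have hJA : U * A₁ * U⁻¹ = !![l,0;0,m] := hA'J.trans hJB
    have h_trJ : (!![l,0;0,m] * A').trace = (!![l,0;0,m] * B').trace := by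
      have hL : !![l,0;0,m] * A' = U * (A₁ * A₂) * U⁻¹ := by
        calc !![l,0;0,m] * A' = (U * A₁ * U⁻¹) * (U * A₂ * U⁻¹) := by rw [hJA, hA'def]
          _ = U * A₁ * (U⁻¹ * U) * A₂ * U⁻¹ := by noncomm_ring
          _ = U * (A₁ * A₂) * U⁻¹ := by rw [cancelU]; noncomm_ring
      have hRint : R⁻¹ * (R⁻¹)⁻¹ = 1 := by rw [hRR]; exact Matrix.nonsing_inv_mul R hRd
      have hL' : !![l,0;0,m] * B' = R⁻¹ * (B₁ * B₂) * (R⁻¹)⁻¹ := by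
        calc !![l,0;0,m] * B' = (R⁻¹ * B₁ * (R⁻¹)⁻¹) * (R⁻¹ * B₂ * (R⁻¹)⁻¹) := by
              rw [hRR, hJB, hB'def]
          _ = R⁻¹ * B₁ * ((R⁻¹)⁻¹ * R⁻¹) * B₂ * (R⁻¹)⁻¹ := by noncomm_ring
          _ = R⁻¹ * (B₁ * B₂) * (R⁻¹)⁻¹ := by
              rw [hRR, cancelR]; noncomm_ring
      rw [hL, hL', my_trace_conj hU, my_trace_conj hRinv]; exact htr12
    have h1' : A' 0 0 + A' 1 1 = B' 0 0 + B' 1 1 := by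
      rw [← Matrix.trace_fin_two, ← Matrix.trace_fin_two]; exact h_tr
    have h2' : A' 0 0 * A' 1 1 - A' 0 1 * A' 1 0 = B' 0 0 * B' 1 1 - B' 0 1 * B' 1 0 := by
      rw [← Matrix.det_fin_two, ← Matrix.det_fin_two]; exact h_det
    have h3' : l * A' 0 0 + m * A' 1 1 = l * B' 0 0 + m * B' 1 1 := by
      have h := h_trJ
      rw [Matrix.trace_fin_two, Matrix.trace_fin_two] at h
      simp [Matrix.mul_apply, Fin.sum_univ_two] at h
      linear_combination h
    -- irreducibility of the conjugated B family
    have hirrB' := irr_conj hRinv (irr_two hB1 hB2 hprodB hirrB)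
    rw [hRR, hJB, ← hB'def] at hirrB'
    have hb' : B' 0 1 ≠ 0 := by
      intro h0
      have hu : (Pi.single 1 1 : Fin 2 → ℂ) ≠ 0 := by
        intro h; have := congrFun h 1; simp at this
      refine no_common_eigen_of_irr2 hirrB' hu (l₁ := m) (l₂ := B' 1 1) ?_ ?_
      · ext i; fin_cases i <;> simp [Matrix.mulVec_single]
      · ext i; fin_cases i <;> simp [Matrix.mulVec_single, h0]
    obtain ⟨hint, hcomm⟩ := core_diag hlm h1' h2' h3'
      (b := A' 0 1) (c := A' 1 0) (b' := B' 0 1) (c' := B' 1 0)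
    have hint' : !![B' 0 1, 0; 0, A' 0 1] * A' = B' * !![B' 0 1, 0; 0, A' 0 1] := by
      rw [Matrix.eta_fin_two A', Matrix.eta_fin_two B']
      exact hint
    set P' : Mat2 := !![B' 0 1, 0; 0, A' 0 1] with hP'def
    set P : Mat2 := R * P' * U with hPdef
    have hUA1 : U * A₁ = !![l,0;0,m] * U := conj_comm hU hJA
    have hUA2 : U * A₂ = A' * U := conj_comm hU hA'def.symm
    have hRB' : B₂ * R = R * B' := by
      rw [hB'def, ← Matrix.mul_assoc, ← Matrix.mul_assoc, cancelR, Matrix.one_mul]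
    have hPA1 : P * A₁ = B₁ * P := by
      calc P * A₁ = R * P' * (U * A₁) := by rw [hPdef]; noncomm_ring
        _ = R * P' * (!![l,0;0,m] * U) := by rw [hUA1]
        _ = R * (P' * !![l,0;0,m]) * U := by noncomm_ring
        _ = R * (!![l,0;0,m] * P') * U := by rw [hcomm]
        _ = (R * !![l,0;0,m]) * P' * U := by noncomm_ring
        _ = (B₁ * R) * P' * U := by rw [hMR]
        _ = B₁ * P := by rw [hPdef]; noncomm_ring
    have hPA2 : P * A₂ = B₂ * P := by
      calc P * A₂ = R * P' * (U * A₂) := by rw [hPdef]; noncomm_ring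
        _ = R * P' * (A' * U) := by rw [hUA2]
        _ = R * (P' * A') * U := by noncomm_ring
        _ = R * (B' * P') * U := by rw [hint']
        _ = (R * B') * P' * U := by noncomm_ring
        _ = (B₂ * R) * P' * U := by rw [hRB']
        _ = B₂ * P := by rw [hPdef]; noncomm_ring
    have hPne : P ≠ 0 := by
      intro h0
      have hP'0 : P' = 0 := by
        have h1 : R⁻¹ * P * U⁻¹ = P' := by
          rw [hPdef]
          calc R⁻¹ * (R * P' * U) * U⁻¹
              = (R⁻¹ * R) * P' * (U * U⁻¹) := by noncomm_ring
            _ = P' := by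
                rw [Matrix.nonsing_inv_mul R hRd, Matrix.mul_nonsing_inv U hUd,
                  Matrix.one_mul, Matrix.mul_one]
        rw [h0, Matrix.mul_zero, Matrix.zero_mul] at h1
        exact h1.symm
      have := congrFun (congrFun hP'0 0) 0
      rw [hP'def] at this
      simp at this
      exact hb' this
    have hPunit := schur hPne hPA1 hPA2 hirrA2
    exact ⟨P, hPunit, assemble hprodA hprodB hPunit hPA1 hPA2⟩
  · -- Jordan case, J = !![l,1;0,l]
    have hJB : R⁻¹ * B₁ * R = !![l,1;0,l] := by
      rw [Matrix.mul_assoc, hMR, ← Matrix.mul_assoc, Matrix.nonsing_inv_mul R hRd,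
        Matrix.one_mul]
    have hJA : U * A₁ * U⁻¹ = !![l,1;0,l] := hA'J.trans hJB
    have h_trJ : (!![l,1;0,l] * A').trace = (!![l,1;0,l] * B').trace := by
      have hL : !![l,1;0,l] * A' = U * (A₁ * A₂) * U⁻¹ := by
        calc !![l,1;0,l] * A' = (U * A₁ * U⁻¹) * (U * A₂ * U⁻¹) := by rw [hJA, hA'def]
          _ = U * A₁ * (U⁻¹ * U) * A₂ * U⁻¹ := by noncomm_ring
          _ = U * (A₁ * A₂) * U⁻¹ := by rw [cancelU]; noncomm_ring
      have hL' : !![l,1;0,l] * B' = R⁻¹ * (B₁ * B₂) * (R⁻¹)⁻¹ := by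
        calc !![l,1;0,l] * B' = (R⁻¹ * B₁ * (R⁻¹)⁻¹) * (R⁻¹ * B₂ * (R⁻¹)⁻¹) := by
              rw [hRR, hJB, hB'def]
          _ = R⁻¹ * B₁ * ((R⁻¹)⁻¹ * R⁻¹) * B₂ * (R⁻¹)⁻¹ := by noncomm_ring
          _ = R⁻¹ * (B₁ * B₂) * (R⁻¹)⁻¹ := by
              rw [hRR, cancelR]; noncomm_ring
      rw [hL, hL', my_trace_conj hU, my_trace_conj hRinv]; exact htr12
    have h1' : A' 0 0 + A' 1 1 = B' 0 0 + B' 1 1 := by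
      rw [← Matrix.trace_fin_two, ← Matrix.trace_fin_two]; exact h_tr
    have h2' : A' 0 0 * A' 1 1 - A' 0 1 * A' 1 0 = B' 0 0 * B' 1 1 - B' 0 1 * B' 1 0 := by
      rw [← Matrix.det_fin_two, ← Matrix.det_fin_two]; exact h_det
    have h3' : l * A' 0 0 + A' 1 0 + l * A' 1 1 = l * B' 0 0 + B' 1 0 + l * B' 1 1 := by
      have h := h_trJ
      rw [Matrix.trace_fin_two, Matrix.trace_fin_two] at h
      simp [Matrix.mul_apply, Fin.sum_univ_two] at h
      linear_combination h
    have hirrA' := irr_conj hU hirrA2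
    rw [hJA, ← hA'def] at hirrA'
    have hc : A' 1 0 ≠ 0 := by
      intro h0
      have hu : (Pi.single 0 1 : Fin 2 → ℂ) ≠ 0 := by
        intro h; have := congrFun h 0; simp at this
      refine no_common_eigen_of_irr2 hirrA' hu (l₁ := l) (l₂ := A' 0 0) ?_ ?_
      · ext i; fin_cases i <;> simp [Matrix.mulVec_single]
      · ext i; fin_cases i <;> simp [Matrix.mulVec_single, h0]
    obtain ⟨hint, hcomm⟩ := core_jordan h1' h2' h3'
      (b := A' 0 1) (b' := B' 0 1)
    have hint' : !![A' 1 0, A' 1 1 - B' 1 1; 0, A' 1 0] * A'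
        = B' * !![A' 1 0, A' 1 1 - B' 1 1; 0, A' 1 0] := by
      rw [Matrix.eta_fin_two A', Matrix.eta_fin_two B']
      exact hint
    set P' : Mat2 := !![A' 1 0, A' 1 1 - B' 1 1; 0, A' 1 0] with hP'def
    set P : Mat2 := R * P' * U with hPdef
    have hUA1 : U * A₁ = !![l,1;0,l] * U := conj_comm hU hJA
    have hUA2 : U * A₂ = A' * U := conj_comm hU hA'def.symm
    have hRB' : B₂ * R = R * B' := by
      rw [hB'def, ← Matrix.mul_assoc, ← Matrix.mul_assoc, cancelR, Matrix.one_mul]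
    have hPA1 : P * A₁ = B₁ * P := by
      calc P * A₁ = R * P' * (U * A₁) := by rw [hPdef]; noncomm_ring
        _ = R * P' * (!![l,1;0,l] * U) := by rw [hUA1]
        _ = R * (P' * !![l,1;0,l]) * U := by noncomm_ring
        _ = R * (!![l,1;0,l] * P') * U := by rw [hcomm]
        _ = (R * !![l,1;0,l]) * P' * U := by noncomm_ring
        _ = (B₁ * R) * P' * U := by rw [hMR]
        _ = B₁ * P := by rw [hPdef]; noncomm_ring
    have hPA2 : P * A₂ = B₂ * P := by
      calc P * A₂ = R * P' * (U * A₂) := by rw [hPdef]; noncomm_ring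
        _ = R * P' * (A' * U) := by rw [hUA2]
        _ = R * (P' * A') * U := by noncomm_ring
        _ = R * (B' * P') * U := by rw [hint']
        _ = (R * B') * P' * U := by noncomm_ring
        _ = (B₂ * R) * P' * U := by rw [hRB']
        _ = B₂ * P := by rw [hPdef]; noncomm_ring
    have hPne : P ≠ 0 := by
      intro h0
      have hP'0 : P' = 0 := by
        have h1 : R⁻¹ * P * U⁻¹ = P' := by
          rw [hPdef]
          calc R⁻¹ * (R * P' * U) * U⁻¹
              = (R⁻¹ * R) * P' * (U * U⁻¹) := by noncomm_ring
            _ = P' := by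
                rw [Matrix.nonsing_inv_mul R hRd, Matrix.mul_nonsing_inv U hUd,
                  Matrix.one_mul, Matrix.mul_one]
        rw [h0, Matrix.mul_zero, Matrix.zero_mul] at h1
        exact h1.symm
      have := congrFun (congrFun hP'0 0) 0
      rw [hP'def] at this
      simp at this
      exact hc this
    have hPunit := schur hPne hPA1 hPA2 hirrA2
    exact ⟨P, hPunit, assemble hprodA hprodB hPunit hPA1 hPA2⟩
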